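/- Let $K$ be a finitely generated ring and $I$ a two-sided ideal of $K$ such that the additive group of $K/I$ is finitely generated and $I$ itself, as a ring, is finitely separable. Then $K$ is finitely separable. -/

import Mathlib

/-- A (not necessarily unital) ring `K` is finitely separable if every element `a`
lying outside a subring `A` can be separated from `A` by a homomorphism to a finite ring. -/
def IsFinSep (K : Type) [NonUnitalRing K] : Prop :=
  ∀ (a : K) (A : NonUnitalSubring K), a ∉ A →
    ∃ (F : Type) (_ : NonUnitalRing F) (_ : Finite F),
      ∃ φ : K →ₙ+* F, φ a ∉ ⇑φ '' (A : Set K)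

/-- `ppow a n = a ^ (n + 1)`, the positive powers of `a` in a non-unital ring. -/
def ppow {K : Type} [NonUnitalRing K] (a : K) : ℕ → K
  | 0 => a
  | n + 1 => ppow a n * a

/-- Evaluation of an integer polynomial (whose constant term is ignored, hence
meaningful for polynomials with zero constant term) at an element of a non-unital ring. -/
def evalnc {K : Type} [NonUnitalRing K] (p : Polynomial ℤ) (a : K) : K :=
  ∑ i ∈ Finset.range p.natDegree, p.coeff (i + 1) • ppow a i


lemma nsmul_eq_of_modeq {G : Type*} [AddCommGroup G] {n a b : ℕ} (x : G) (h : n • x = 0)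
    (hab : a ≡ b [MOD n]) : a • x = b • x := by
  wlog hle : a ≤ b generalizing a b
  · exact (this hab.symm (le_of_not_ge hle)).symm
  obtain ⟨k, hk⟩ := (Nat.modEq_iff_dvd' hle).mp hab
  have hb : b = a + n * k := by omega
  rw [hb, add_nsmul, mul_comm n k, mul_smul, h, smul_zero, add_zero]

lemma finite_of_gen_of_exponent {G : Type*} [AddCommGroup G] (n : ℕ) (hn : 0 < n)
    (hexp : ∀ x : G, n • x = 0) (S : Finset G)
    (hgen : ∀ x : G, x ∈ AddSubgroup.closure (S : Set G)) : Finite G := by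
  classical
  rcases eq_or_lt_of_le (show 1 ≤ n from hn) with h1 | h2
  · have : Subsingleton G := ⟨fun x y => by
      have hx := hexp x; have hy := hexp y
      rw [← h1, one_nsmul] at hx hy; rw [hx, hy]⟩
    infer_instance
  have : NeZero n := ⟨hn.ne'⟩
  set f : (↥S → Fin n) → G := fun c => ∑ s : ↥S, (c s).val • (s : G) with hf
  have hadd : ∀ c d, f c + f d = f (c + d) := by
    intro c d
    rw [hf]; simp only
    rw [← Finset.sum_add_distrib]
    apply Finset.sum_congr rfl
    intro s _
    rw [← add_nsmul]
    apply nsmul_eq_of_modeq _ (hexp _)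
    have h2 : ((c s + d s : Fin n)).val = ((c s).val + (d s).val) % n := Fin.add_def _ _ ▸ rfl
    rw [Pi.add_apply, h2]
    exact (Nat.mod_modEq _ n).symm
  have hzero : f 0 = 0 := by
    rw [hf]; simp only [Pi.zero_apply, Fin.val_zero, zero_nsmul, Finset.sum_const_zero]
  have hrange : ∀ x : G, x ∈ Set.range f := by
    intro x
    refine AddSubgroup.closure_induction ?_ ?_ ?_ ?_ (hgen x)
    · intro s hs
      refine ⟨fun t => if t = (⟨s, hs⟩ : ↥S) then 1 else 0, ?_⟩
      rw [hf]; simp only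
      rw [Finset.sum_eq_single (⟨s, hs⟩ : ↥S)]
      · have h1 : ((1 : Fin n)).val = 1 := by
          rw [Fin.val_one']; exact Nat.mod_eq_of_lt h2
        rw [if_pos rfl, h1, one_nsmul]
      · intro b _ hb; rw [if_neg hb]; simp
      · intro h; exact absurd (Finset.mem_univ _) h
    · exact ⟨0, hzero⟩
    · rintro x y - - ⟨c, rfl⟩ ⟨d, rfl⟩; exact ⟨c + d, (hadd c d).symm⟩
    · rintro x - ⟨c, rfl⟩
      refine ⟨-c, ?_⟩
      have h3 : f (-c) + f c = 0 := by rw [hadd, neg_add_cancel, hzero]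
      exact eq_neg_of_add_eq_zero_left h3
  exact Finite.of_surjective f (fun x => hrange x)


lemma exists_nsmul_ne {G : Type} [AddCommGroup G] [AddGroup.FG G] (g : G) (hg : g ≠ 0) :
    ∃ n : ℕ, 0 < n ∧ ∀ x : G, n • x ≠ g := by
  obtain ⟨r, ι, fι, p, hp, e, ⟨φ⟩⟩ := AddCommGroup.equiv_free_prod_directSum_zmod G
  by_cases hv : (φ g).1 = 0
  · -- torsion case
    have hw : (φ g).2 ≠ 0 := by
      intro h
      have h0 : φ g = 0 := Prod.ext hv h
      exact hg (by simpa using congrArg φ.symm h0)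
    obtain ⟨i, hi⟩ : ∃ i, (φ g).2 i ≠ 0 := by
      by_contra h
      push_neg at h
      exact hw (DFinsupp.ext h)
    obtain ⟨w0, hw0⟩ : ∃ w0, (φ g).2 i = w0 := ⟨_, rfl⟩
    refine ⟨p i ^ e i, pow_pos (hp i).pos _, ?_⟩
    intro x hx
    have h1 : φ g = (p i ^ e i) • φ x := by rw [← hx, map_nsmul]
    have h2 : w0 = (p i ^ e i) • ((φ x).2 i) := by
      rw [← hw0, h1, Prod.smul_snd, DFinsupp.smul_apply]
    rw [hw0] at hi
    apply hi
    rw [h2, nsmul_eq_mul, ZMod.natCast_self, zero_mul]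
  · obtain ⟨i, hi⟩ : ∃ i, (φ g).1 i ≠ 0 := by
      by_contra h
      push_neg at h
      exact hv (Finsupp.ext h)
    obtain ⟨c0, hc0⟩ : ∃ c0, (φ g).1 i = c0 := ⟨_, rfl⟩
    rw [hc0] at hi
    refine ⟨c0.natAbs + 1, Nat.succ_pos _, ?_⟩
    intro x hx
    set N := c0.natAbs + 1 with hN
    have h1 : φ g = N • φ x := by rw [← hx, map_nsmul]
    have h2 := congrArg (fun q : (Fin r →₀ ℤ) × (DirectSum ι fun i => ZMod (p i ^ e i)) => q.1 i) h1
    simp only [Prod.smul_fst, Finsupp.smul_apply, nsmul_eq_mul] at h2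
    rw [hc0] at h2
    have hdvd : ((N : ℕ) : ℤ) ∣ c0 := Dvd.intro _ h2.symm
    have hle : ((N : ℕ) : ℤ) ≤ |c0| :=
      Int.le_of_dvd (abs_pos.mpr hi) ((dvd_abs _ _).mpr hdvd)
    rw [Int.abs_eq_natAbs] at hle
    omega


variable {K : Type} [NonUnitalRing K]

/-- The ring congruence associated to a two-sided ideal (given as a subring closed under
left and right multiplication). -/
def idealCon (L : NonUnitalSubring K) (hL : ∀ x ∈ L, ∀ y : K, x * y ∈ L ∧ y * x ∈ L) :
    RingCon K where
  r x y := x - y ∈ L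
  iseqv := ⟨fun x => by simpa using L.zero_mem, fun {x y} h => by simpa using L.neg_mem h,
    fun {x y z} h1 h2 => by simpa using L.add_mem h1 h2⟩
  add' := fun {w x y z} h1 h2 => by
    have := L.add_mem h1 h2
    have he : w - x + (y - z) = w + y - (x + z) := by abel
    rwa [he] at this
  mul' := fun {w x y z} h1 h2 => by
    have ha : w * y - x * z = (w - x) * y + x * (y - z) := by
      rw [sub_mul, mul_sub]; abel
    show w * y - x * z ∈ L
    rw [ha]
    exact L.add_mem ((hL _ h1 y).1) ((hL _ h2 x).2)

lemma idealCon_r (L : NonUnitalSubring K) (hL) (x y : K) :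
    (idealCon L hL) x y ↔ x - y ∈ L := Iff.rfl

/-- quotient map as a non-unital ring hom -/
def idealQuot (L : NonUnitalSubring K) (hL) : K →ₙ+* (idealCon L hL).Quotient where
  toFun x := (x : (idealCon L hL).Quotient)
  map_add' x y := RingCon.coe_add _ _ _
  map_mul' x y := RingCon.coe_mul _ _ _
  map_zero' := RingCon.coe_zero _

lemma idealQuot_eq_iff (L : NonUnitalSubring K) (hL) (x y : K) :
    idealQuot L hL x = idealQuot L hL y ↔ x - y ∈ L := RingCon.eq _

lemma idealQuot_surj (L : NonUnitalSubring K) (hL) : Function.Surjective (idealQuot L hL) :=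
  fun q => Quotient.inductionOn' q (fun x => ⟨x, rfl⟩)

lemma sep_of_ideal (A : NonUnitalSubring K) (J : NonUnitalSubring K)
    (hJ : ∀ x ∈ J, ∀ y : K, x * y ∈ J ∧ y * x ∈ J)
    (C : Finset K)
    (hdec : ∀ u : K, ∃ γ ∈ AddSubgroup.closure (C : Set K), u - γ ∈ J)
    (a : K) (ha : ∀ α ∈ A, ∀ j ∈ J, a ≠ α + j) :
    ∃ (F : Type) (_ : NonUnitalRing F) (_ : Finite F),
      ∃ φ : K →ₙ+* F, φ a ∉ ⇑φ '' (A : Set K) := by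
  classical
  set P : AddSubgroup K := A.toAddSubgroup ⊔ J.toAddSubgroup with hP
  have hAP : A.toAddSubgroup ≤ P := le_sup_left
  have hJP : J.toAddSubgroup ≤ P := le_sup_right
  have haP : a ∉ P := by
    intro h
    rw [AddSubgroup.mem_sup] at h
    obtain ⟨α, hα, j, hj, hsum⟩ := h
    exact ha α hα j hj hsum.symm
  set π : K →+ K ⧸ P := QuotientAddGroup.mk' P with hπ
  have hπsurj : Function.Surjective π := QuotientAddGroup.mk'_surjective P
  have hπ0 : ∀ x : K, π x = 0 ↔ x ∈ P := by
    intro x; exact QuotientAddGroup.eq_zero_iff x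
  haveI : AddGroup.FG (K ⧸ P) := by
    rw [AddGroup.fg_iff]
    refine ⟨π '' (C : Set K), ?_, (C.finite_toSet.image _)⟩
    rw [← AddMonoidHom.map_closure, eq_top_iff]
    intro q _
    obtain ⟨u, rfl⟩ := hπsurj q
    obtain ⟨γ, hγ, h417⟩ := hdec u
    have heq : π u = π γ := by
      have h0 : π (u - γ) = 0 := (hπ0 _).mpr (hJP h417)
      rw [map_sub, sub_eq_zero] at h0
      exact h0
    rw [heq]
    exact AddSubgroup.mem_map_of_mem _ hγ
  have haπ : π a ≠ 0 := fun h => haP ((hπ0 a).mp h)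
  obtain ⟨n, hn, hZ⟩ := exists_nsmul_ne (π a) haπ
  -- the ideal L = J + n•K
  set L : NonUnitalSubring K :=
    { carrier := {x | ∃ j ∈ J, ∃ y : K, x = j + n • y}
      zero_mem' := ⟨0, J.zero_mem, 0, by simp⟩
      add_mem' := by
        rintro x x' ⟨j, hj, y, rfl⟩ ⟨j', hj', y', rfl⟩
        exact ⟨j + j', J.add_mem hj hj', y + y', by rw [smul_add]; abel⟩
      neg_mem' := by
        rintro x ⟨j, hj, y, rfl⟩
        exact ⟨-j, J.neg_mem hj, -y, by rw [smul_neg]; abel⟩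
      mul_mem' := by
        rintro x x' ⟨j, hj, y, rfl⟩ ⟨j', hj', y', rfl⟩
        refine ⟨j * j', J.mul_mem hj hj', j * y' + y * j' + y * (n • y'), ?_⟩
        rw [add_mul, mul_add, mul_add, mul_smul_comm, smul_mul_assoc, smul_mul_assoc,
          smul_add, smul_add]
        abel } with hLdef
  have hmemL : ∀ x : K, x ∈ L ↔ ∃ j ∈ J, ∃ y : K, x = j + n • y := fun x => Iff.rfl
  have hL2 : ∀ x ∈ L, ∀ y : K, x * y ∈ L ∧ y * x ∈ L := by
    rintro x ⟨j, hj, y, rfl⟩ k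
    constructor
    · exact ⟨j * k, (hJ j hj k).1, y * k, by rw [add_mul, smul_mul_assoc]⟩
    · exact ⟨k * j, (hJ j hj k).2, k * y, by rw [mul_add, mul_smul_comm]⟩
  have hJL : ∀ j ∈ J, j ∈ L := fun j hj => ⟨j, hj, 0, by simp⟩
  have hnL : ∀ y : K, (n • y) ∈ L := fun y => ⟨0, J.zero_mem, y, by simp⟩
  set φ := idealQuot L hL2 with hφ
  refine ⟨(idealCon L hL2).Quotient, inferInstance, ?_, φ, ?_⟩
  · -- finiteness
    refine finite_of_gen_of_exponent n hn ?_ (C.image φ) ?_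
    · intro q
      obtain ⟨x, rfl⟩ := idealQuot_surj L hL2 q
      rw [← map_nsmul]
      have : φ (n • x) = φ 0 := by
        rw [idealQuot_eq_iff]
        simpa using hnL x
      rw [this, map_zero]
    · intro q
      obtain ⟨u, rfl⟩ := idealQuot_surj L hL2 q
      obtain ⟨γ, hγ, huγ⟩ := hdec u
      have heq : φ u = φ γ := by
        rw [idealQuot_eq_iff]
        exact hJL _ huγ
      rw [heq, Finset.coe_image]
      have : (⇑φ '' (C : Set K)) = (⇑φ.toAddMonoidHom '' (C : Set K)) := rfl
      rw [this, ← AddMonoidHom.map_closure φ.toAddMonoidHom]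
      exact AddSubgroup.mem_map_of_mem _ hγ
  · -- separation
    rintro ⟨α, hα, heq⟩
    rw [show (φ α = φ a) ↔ α - a ∈ L from idealQuot_eq_iff L hL2 α a] at heq
    obtain ⟨j, hj, y, hxy⟩ := heq
    have hay : a = α - (j + n • y) := by rw [← hxy]; abel
    have hπα : π α = 0 := (hπ0 _).mpr (hAP hα)
    have hπj : π j = 0 := (hπ0 _).mpr (hJP hj)
    apply hZ (-(π y))
    have hfin : π a = n • (-(π y)) := by
      rw [hay, map_sub, map_add, map_nsmul, hπα, hπj, smul_neg]
      abel
    exact hfin.symm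

lemma exists_reps {α β : Type*} [Nonempty α] [Finite β] (f : α → β) :
    ∃ T : Finset α, ∀ x : α, ∃ t ∈ T, f x = f t := by
  classical
  have hfin : (Set.range f).Finite := Set.toFinite _
  refine ⟨hfin.toFinset.image (Function.invFun f), fun x => ?_⟩
  refine ⟨Function.invFun f (f x), ?_, ?_⟩
  · exact Finset.mem_image_of_mem _ (hfin.mem_toFinset.mpr ⟨x, rfl⟩)
  · exact (Function.invFun_eq ⟨x, rfl⟩).symm

/-- If `K` is a finitely generated ring, `I` a two-sided ideal with `K/I` having
finitely generated additive group, and `I` is itself finitely separable as a ring,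
then `K` is finitely separable. -/
theorem stmt13 (K : Type) [NonUnitalRing K]
    (hK : ∃ s : Finset K, NonUnitalSubring.closure (s : Set K) = ⊤)
    (I : NonUnitalSubring K)
    (hI : ∀ x ∈ I, ∀ y : K, x * y ∈ I ∧ y * x ∈ I)
    (hq : AddGroup.FG (K ⧸ I.toAddSubgroup))
    (hIsep : IsFinSep I) :
    IsFinSep K := by
  classical
  intro a A haA
  -- a finite "transversal" for I in K
  set πI : K →+ K ⧸ I.toAddSubgroup := QuotientAddGroup.mk' I.toAddSubgroup with hπI
  obtain ⟨S, hScl, hSfin⟩ := AddGroup.fg_iff.mp hq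
  choose lft hlft using fun q : K ⧸ I.toAddSubgroup => QuotientAddGroup.mk'_surjective I.toAddSubgroup q
  set C : Finset K := hSfin.toFinset.image lft with hC
  have hdecI : ∀ u : K, ∃ γ ∈ AddSubgroup.closure (C : Set K), u - γ ∈ I := by
    intro u
    have h1 : πI u ∈ AddSubgroup.closure S := by rw [hScl]; trivial
    have h2 : S ⊆ ⇑πI '' (C : Set K) := by
      intro s hs
      refine ⟨lft s, ?_, hlft s⟩
      rw [hC, Finset.coe_image]
      exact ⟨s, hSfin.mem_toFinset.mpr hs, rfl⟩
    have h3 : πI u ∈ AddSubgroup.closure (⇑πI '' (C : Set K)) :=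
      AddSubgroup.closure_mono h2 h1
    rw [← AddMonoidHom.map_closure] at h3
    obtain ⟨γ, hγ, hγu⟩ := h3
    refine ⟨γ, hγ, ?_⟩
    have h0 : πI (u - γ) = 0 := by rw [map_sub, hγu, sub_self]
    exact (QuotientAddGroup.eq_zero_iff _).mp h0
  by_cases hcase : ∃ b ∈ A, ∃ m ∈ I, a = b + m
  case neg =>
    push_neg at hcase
    exact sep_of_ideal A I hI C hdecI a hcase
  case pos =>
  obtain ⟨b, hb, c, hcI, habc⟩ := hcase
  have hc : c ∉ A := fun h => haA (habc ▸ A.add_mem hb h)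
  set B : NonUnitalSubring ↥I := A.comap (NonUnitalSubringClass.subtype I) with hB
  have hcB : (⟨c, hcI⟩ : ↥I) ∉ B := by
    rw [hB, NonUnitalSubring.mem_comap]
    exact hc
  obtain ⟨F₀, iF₀, fF₀, ψ, hψ⟩ := hIsep ⟨c, hcI⟩ B hcB
  -- extend ψ by zero
  set ψ' : K → F₀ := fun x => if h : x ∈ I then ψ ⟨x, h⟩ else 0 with hψ'
  have ψ'mem : ∀ {x : K} (h : x ∈ I), ψ' x = ψ ⟨x, h⟩ := fun {x} h => dif_pos h
  have ψ'add : ∀ {x y : K}, x ∈ I → y ∈ I → ψ' (x + y) = ψ' x + ψ' y := by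
    intro x y hx hy
    rw [ψ'mem hx, ψ'mem hy, ψ'mem (I.add_mem hx hy), ← map_add]
    rfl
  have ψ'mul : ∀ {x y : K}, x ∈ I → y ∈ I → ψ' (x * y) = ψ' x * ψ' y := by
    intro x y hx hy
    rw [ψ'mem hx, ψ'mem hy, ψ'mem (I.mul_mem hx hy), ← map_mul]
    rfl
  have ψ'neg : ∀ {x : K}, x ∈ I → ψ' (-x) = -ψ' x := by
    intro x hx
    rw [ψ'mem hx, ψ'mem (I.neg_mem hx), ← map_neg]
    rfl
  have ψ'sub : ∀ {x y : K}, x ∈ I → y ∈ I → ψ' (x - y) = ψ' x - ψ' y := by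
    intro x y hx hy
    rw [sub_eq_add_neg, ψ'add hx (I.neg_mem hy), ψ'neg hy, sub_eq_add_neg]
  have ψ'zero : ψ' 0 = 0 := by
    rw [ψ'mem I.zero_mem]
    exact map_zero ψ
  -- facts about the ideal I
  have hIl : ∀ {x : K}, x ∈ I → ∀ y : K, y * x ∈ I := fun hx y => (hI _ hx y).2
  have hIr : ∀ {x : K}, x ∈ I → ∀ y : K, x * y ∈ I := fun hx y => (hI _ hx y).1
  -- the largest two-sided K-ideal inside ker ψ
  set Jc : Set K := {z | z ∈ I ∧ ψ' z = 0 ∧ (∀ u : K, ψ' (u * z) = 0) ∧ (∀ v : K, ψ' (z * v) = 0)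
      ∧ (∀ u v : K, ψ' (u * z * v) = 0)} with hJc
  have hJcz : (0 : K) ∈ Jc := by
    refine ⟨I.zero_mem, ψ'zero, fun u => ?_, fun v => ?_, fun u v => ?_⟩
    · rw [mul_zero]; exact ψ'zero
    · rw [zero_mul]; exact ψ'zero
    · rw [mul_zero, zero_mul]; exact ψ'zero
  have hJca : ∀ {x y : K}, x ∈ Jc → y ∈ Jc → x + y ∈ Jc := by
    rintro x y ⟨hxI, hx0, hxl, hxr, hxb⟩ ⟨hyI, hy0, hyl, hyr, hyb⟩
    refine ⟨I.add_mem hxI hyI, by rw [ψ'add hxI hyI, hx0, hy0, add_zero],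
      fun u => ?_, fun v => ?_, fun u v => ?_⟩
    · rw [mul_add, ψ'add (hIl hxI u) (hIl hyI u), hxl u, hyl u, add_zero]
    · rw [add_mul, ψ'add (hIr hxI v) (hIr hyI v), hxr v, hyr v, add_zero]
    · rw [mul_add, add_mul, ψ'add (hIr (hIl hxI u) v) (hIr (hIl hyI u) v), hxb u v, hyb u v,
        add_zero]
  have hJcn : ∀ {x : K}, x ∈ Jc → -x ∈ Jc := by
    rintro x ⟨hxI, hx0, hxl, hxr, hxb⟩
    refine ⟨I.neg_mem hxI, by rw [ψ'neg hxI, hx0, neg_zero], fun u => ?_, fun v => ?_,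
      fun u v => ?_⟩
    · rw [mul_neg, ψ'neg (hIl hxI u), hxl u, neg_zero]
    · rw [neg_mul, ψ'neg (hIr hxI v), hxr v, neg_zero]
    · rw [mul_neg, neg_mul, ψ'neg (hIr (hIl hxI u) v), hxb u v, neg_zero]
  have hJcm : ∀ {x y : K}, x ∈ Jc → y ∈ Jc → x * y ∈ Jc := by
    rintro x y ⟨hxI, hx0, hxl, hxr, hxb⟩ ⟨hyI, hy0, hyl, hyr, hyb⟩
    refine ⟨I.mul_mem hxI hyI, by rw [ψ'mul hxI hyI, hx0, zero_mul], fun u => ?_, fun v => ?_,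
      fun u v => ?_⟩
    · rw [← mul_assoc, ψ'mul (hIl hxI u) hyI, hxl u, zero_mul]
    · rw [mul_assoc, ψ'mul hxI (hIr hyI v), hx0, zero_mul]
    · have hassoc : u * (x * y) * v = (u * x) * (y * v) := by noncomm_ring
      rw [hassoc, ψ'mul (hIl hxI u) (hIr hyI v), hxl u, zero_mul]
  set Jkey : NonUnitalSubring K :=
    { carrier := Jc
      zero_mem' := hJcz
      add_mem' := fun hx hy => hJca hx hy
      neg_mem' := fun hx => hJcn hx
      mul_mem' := fun hx hy => hJcm hx hy } with hJkey
  have hJ2 : ∀ x ∈ Jkey, ∀ y : K, x * y ∈ Jkey ∧ y * x ∈ Jkey := by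
    rintro x ⟨hxI, hx0, hxl, hxr, hxb⟩ k
    constructor
    · refine ⟨hIr hxI k, hxr k, fun u => ?_, fun v => ?_, fun u v => ?_⟩
      · rw [← mul_assoc]; exact hxb u k
      · rw [mul_assoc]; exact hxr (k * v)
      · have hassoc : u * (x * k) * v = u * x * (k * v) := by noncomm_ring
        rw [hassoc]; exact hxb u (k * v)
    · refine ⟨hIl hxI k, hxl k, fun u => ?_, fun v => ?_, fun u v => ?_⟩
      · rw [← mul_assoc]; exact hxl (u * k)
      · exact hxb k v
      · have hassoc : u * (k * x) * v = (u * k) * x * v := by noncomm_ring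
        rw [hassoc]; exact hxb (u * k) v
  -- a finite transversal for Jkey inside I
  haveI : Nonempty ↥I := ⟨⟨0, I.zero_mem⟩⟩
  haveI : Finite F₀ := fF₀
  set Θ : ↥I → F₀ × (↥C → F₀) × (↥C → F₀) × (↥C × ↥C → F₀) := fun x =>
    (ψ x, fun γ => ψ' ((γ : K) * (x : K)), fun γ => ψ' ((x : K) * (γ : K)),
      fun q => ψ' ((q.1 : K) * (x : K) * (q.2 : K))) with hΘ
  obtain ⟨T, hT⟩ := exists_reps Θ
  have ψ'coe : ∀ (w : ↥I), ψ' (w : K) = ψ w := by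
    intro w
    rw [ψ'mem w.2]
  have hkey : ∀ x t : ↥I, Θ x = Θ t → ((x : K) - (t : K)) ∈ Jkey := by
    intro x t hxt
    have h1 : ψ x = ψ t := congrArg (fun p => p.1) hxt
    have h2 : ∀ γ : ↥C, ψ' ((γ : K) * (x : K)) = ψ' ((γ : K) * (t : K)) :=
      fun γ => congrFun (congrArg (fun p => p.2.1) hxt) γ
    have h3 : ∀ γ : ↥C, ψ' ((x : K) * (γ : K)) = ψ' ((t : K) * (γ : K)) :=
      fun γ => congrFun (congrArg (fun p => p.2.2.1) hxt) γ
    have h4 : ∀ γ γ' : ↥C, ψ' ((γ : K) * (x : K) * (γ' : K)) = ψ' ((γ : K) * (t : K) * (γ' : K)) :=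
      fun γ γ' => congrFun (congrArg (fun p => p.2.2.2) hxt) (γ, γ')
    set z : K := (x : K) - (t : K) with hzdef
    have hzI : z ∈ I := I.sub_mem x.2 t.2
    have hz0 : ψ' z = 0 := by
      rw [hzdef, ψ'sub x.2 t.2, ψ'coe, ψ'coe, h1, sub_self]
    have hbl : ∀ γ ∈ (C : Set K), ψ' (γ * z) = 0 := by
      intro γ hγ
      rw [hzdef, mul_sub, ψ'sub (hIl x.2 γ) (hIl t.2 γ)]
      have := h2 ⟨γ, hγ⟩
      simp only at this
      rw [this, sub_self]
    have hbr : ∀ γ ∈ (C : Set K), ψ' (z * γ) = 0 := by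
      intro γ hγ
      rw [hzdef, sub_mul, ψ'sub (hIr x.2 γ) (hIr t.2 γ)]
      have := h3 ⟨γ, hγ⟩
      simp only at this
      rw [this, sub_self]
    have hbb : ∀ γ ∈ (C : Set K), ∀ γ' ∈ (C : Set K), ψ' (γ * z * γ') = 0 := by
      intro γ hγ γ' hγ'
      rw [hzdef, mul_sub, sub_mul, ψ'sub (hIr (hIl x.2 γ) γ') (hIr (hIl t.2 γ) γ')]
      have := h4 ⟨γ, hγ⟩ ⟨γ', hγ'⟩
      simp only at this
      rw [this, sub_self]
    have Pl : ∀ γ ∈ AddSubgroup.closure (C : Set K), ψ' (γ * z) = 0 := by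
      intro γ hγ
      refine AddSubgroup.closure_induction hbl ?_ ?_ ?_ hγ
      · rw [zero_mul]; exact ψ'zero
      · intro p q _ _ hp hq
        rw [add_mul, ψ'add (hIl hzI p) (hIl hzI q), hp, hq, add_zero]
      · intro p _ hp
        rw [neg_mul, ψ'neg (hIl hzI p), hp, neg_zero]
    have Pr : ∀ γ ∈ AddSubgroup.closure (C : Set K), ψ' (z * γ) = 0 := by
      intro γ hγ
      refine AddSubgroup.closure_induction hbr ?_ ?_ ?_ hγ
      · rw [mul_zero]; exact ψ'zero
      · intro p q _ _ hp hq
        rw [mul_add, ψ'add (hIr hzI p) (hIr hzI q), hp, hq, add_zero]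
      · intro p _ hp
        rw [mul_neg, ψ'neg (hIr hzI p), hp, neg_zero]
    have Pb : ∀ γ ∈ AddSubgroup.closure (C : Set K), ∀ γ' ∈ AddSubgroup.closure (C : Set K),
        ψ' (γ * z * γ') = 0 := by
      intro γ hγ
      refine AddSubgroup.closure_induction (p := fun γ _ => ∀ γ' ∈ AddSubgroup.closure (C : Set K),
        ψ' (γ * z * γ') = 0) ?_ ?_ ?_ ?_ hγ
      · intro p hp γ' hγ'
        refine AddSubgroup.closure_induction (p := fun γ' _ => ψ' (p * z * γ') = 0)
          (fun q hq => hbb p hp q hq) ?_ ?_ ?_ hγ'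
        · show ψ' (p * z * 0) = 0
          rw [mul_zero]; exact ψ'zero
        · intro q r _ _ hqz hrz
          show ψ' (p * z * (q + r)) = 0
          rw [mul_add, ψ'add (hIr (hIl hzI p) q) (hIr (hIl hzI p) r)]
          rw [show ψ' (p * z * q) = 0 from hqz, show ψ' (p * z * r) = 0 from hrz, add_zero]
        · intro q _ hqz
          show ψ' (p * z * -q) = 0
          rw [mul_neg, ψ'neg (hIr (hIl hzI p) q), show ψ' (p * z * q) = 0 from hqz, neg_zero]
      · intro γ' _
        show ψ' (0 * z * γ') = 0
        rw [zero_mul, zero_mul]; exact ψ'zero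
      · intro p q _ _ hp hq γ' hγ'
        show ψ' ((p + q) * z * γ') = 0
        rw [add_mul, add_mul, ψ'add (hIr (hIl hzI p) γ') (hIr (hIl hzI q) γ'), hp γ' hγ',
          hq γ' hγ', add_zero]
      · intro p _ hp γ' hγ'
        show ψ' (-p * z * γ') = 0
        rw [neg_mul, neg_mul, ψ'neg (hIr (hIl hzI p) γ'), hp γ' hγ', neg_zero]
    have hfl : ∀ u : K, ψ' (u * z) = 0 := by
      intro u
      obtain ⟨γ, hγ, hmI⟩ := hdecI u
      have hu : u = γ + (u - γ) := by abel
      rw [hu, add_mul, ψ'add (hIl hzI γ) (I.mul_mem hmI hzI), Pl γ hγ, ψ'mul hmI hzI, hz0,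
        mul_zero, add_zero]
    have hfr : ∀ v : K, ψ' (z * v) = 0 := by
      intro v
      obtain ⟨γ, hγ, hmI⟩ := hdecI v
      have hv : v = γ + (v - γ) := by abel
      rw [hv, mul_add, ψ'add (hIr hzI γ) (I.mul_mem hzI hmI), Pr γ hγ, ψ'mul hzI hmI, hz0,
        zero_mul, add_zero]
    have hfb : ∀ u v : K, ψ' (u * z * v) = 0 := by
      intro u v
      obtain ⟨γ, hγ, hmI⟩ := hdecI u
      obtain ⟨γ', hγ', hmI'⟩ := hdecI v
      have hexp : u * z * v = γ * z * γ' + (γ * z) * (v - γ') + (u - γ) * (z * γ')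
          + ((u - γ) * z) * (v - γ') := by noncomm_ring
      rw [hexp]
      rw [ψ'add (I.add_mem (I.add_mem (hIr (hIl hzI γ) γ') (I.mul_mem (hIl hzI γ) hmI'))
            (I.mul_mem hmI (hIr hzI γ'))) (I.mul_mem (I.mul_mem hmI hzI) hmI'),
          ψ'add (I.add_mem (hIr (hIl hzI γ) γ') (I.mul_mem (hIl hzI γ) hmI'))
            (I.mul_mem hmI (hIr hzI γ')),
          ψ'add (hIr (hIl hzI γ) γ') (I.mul_mem (hIl hzI γ) hmI')]
      rw [Pb γ hγ γ' hγ', ψ'mul (hIl hzI γ) hmI', Pl γ hγ, zero_mul,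
        ψ'mul hmI (hIr hzI γ'), Pr γ' hγ', mul_zero,
        ψ'mul (I.mul_mem hmI hzI) hmI', ψ'mul hmI hzI, hz0, mul_zero, zero_mul]
      simp
    exact ⟨hzI, hz0, hfl, hfr, hfb⟩
  -- decomposition of K modulo Jkey
  set T' : Finset K := T.image (fun t : ↥I => (t : K)) with hT'
  have hdecJ : ∀ u : K, ∃ γ ∈ AddSubgroup.closure ((C ∪ T' : Finset K) : Set K),
      u - γ ∈ Jkey := by
    intro u
    obtain ⟨γ₀, hγ₀, hmI⟩ := hdecI u
    obtain ⟨t, htT, hΘeq⟩ := hT ⟨u - γ₀, hmI⟩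
    refine ⟨γ₀ + (t : K), ?_, ?_⟩
    · apply AddSubgroup.add_mem
      · refine AddSubgroup.closure_mono ?_ hγ₀
        rw [Finset.coe_union]
        exact Set.subset_union_left
      · apply AddSubgroup.subset_closure
        rw [Finset.coe_union]
        refine Set.mem_union_right _ ?_
        rw [hT', Finset.coe_image]
        exact ⟨t, htT, rfl⟩
    · have hk := hkey ⟨u - γ₀, hmI⟩ t hΘeq
      have he : ((⟨u - γ₀, hmI⟩ : ↥I) : K) - (t : K) = u - (γ₀ + (t : K)) := by
        show (u - γ₀) - (t : K) = u - (γ₀ + (t : K))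
        abel
      rwa [he] at hk
  -- a is not in A + Jkey
  have haJ : ∀ α ∈ A, ∀ j ∈ Jkey, a ≠ α + j := by
    intro α hα j hj heq
    obtain ⟨hjI, hj0, -, -, -⟩ := hj
    have h5 : b + c = α + j := by rw [← habc, heq]
    have h6 : c - ((α - b) + j) = (b + c) - (α + j) := by abel
    have h7 : c - ((α - b) + j) = 0 := by rw [h6, h5, sub_self]
    have hcβj : c = (α - b) + j := by rwa [sub_eq_zero] at h7
    have hβA : α - b ∈ A := A.sub_mem hα hb
    have hβI : α - b ∈ I := by
      have h8 : α - b = c - j := by rw [hcβj]; abel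
      rw [h8]; exact I.sub_mem hcI hjI
    apply hψ
    refine ⟨⟨α - b, hβI⟩, ?_, ?_⟩
    · show (⟨α - b, hβI⟩ : ↥I) ∈ (B : Set ↥I)
      rw [hB]
      exact NonUnitalSubring.mem_comap.mpr hβA
    · have h9 : (⟨c, hcI⟩ : ↥I) = ⟨α - b, hβI⟩ + ⟨j, hjI⟩ := Subtype.ext hcβj
      have hj0' : ψ ⟨j, hjI⟩ = 0 := by rw [← ψ'mem hjI]; exact hj0
      rw [h9, map_add, hj0', add_zero]
  exact sep_of_ideal A Jkey hJ2 (C ∪ T') hdecJ a haJ
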